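/- Let α ∈ (−1/2, 1/2) and γ ∈ [0,1), and fix t ∈ (0,∞). Then lim_{s → t, s ≠ t, s > 0} Φ(min(s,t), max(s,t)) / |t−s|^{2α+1} = c · t^{−γ}, where c = 1/(2α+1) + ∫₀^∞ ((1+v)^α − v^α)² dv (a finite constant). -/

import Mathlib

open MeasureTheory

/-- The second-moment function
`Φ(s,t) = ∫₀^s ((t-u)^α - (s-u)^α)² u^{-γ} du + ∫_s^t (t-u)^{2α} u^{-γ} du`,
which equals `E[(Z(t)-Z(s))²]` for the generalized Riemann–Liouville FBM `Z`. -/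
noncomputable def Phi (α γ s t : ℝ) : ℝ :=
  (∫ u in Set.Ioo (0:ℝ) s, ((t-u) ^ α - (s-u) ^ α)^2 * u ^ (-γ)) +
    ∫ u in Set.Ioo s t, (t-u) ^ (2*α) * u ^ (-γ)

set_option maxHeartbeats 1000000
open Set


lemma rpow_diff_le (p : ℝ) (hp : p ≤ 1) {c x y : ℝ} (hc : 0 < c) (hcx : c ≤ x) (hxy : x ≤ y) :
    |y ^ p - x ^ p| ≤ |p| * c ^ (p - 1) * (y - x) := by
  have key : ‖(fun z : ℝ => z ^ p) y - (fun z : ℝ => z ^ p) x‖ ≤ (|p| * c ^ (p-1)) * ‖y - x‖ := by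
    apply Convex.norm_image_sub_le_of_norm_hasDerivWithin_le (f' := fun z => p * z ^ (p - 1))
      (fun z hz => (Real.hasDerivAt_rpow_const (Or.inl (ne_of_gt (hc.trans_le hz)))).hasDerivWithinAt)
      (fun z hz => ?_) (convex_Ici c) hcx (hcx.trans hxy)
    rw [Real.norm_eq_abs, abs_mul]
    have h1 : |z ^ (p-1)| = z ^ (p-1) := abs_of_nonneg (Real.rpow_nonneg (le_of_lt (hc.trans_le hz)) _)
    rw [h1]
    exact mul_le_mul_of_nonneg_left (Real.rpow_le_rpow_of_nonpos hc hz (by linarith)) (abs_nonneg p)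
  rw [Real.norm_eq_abs, Real.norm_eq_abs, abs_of_nonneg (sub_nonneg.mpr hxy)] at key
  exact key

lemma rpow_sq {v p : ℝ} (hv : 0 ≤ v) : (v ^ p)^2 = v ^ (2*p) := by
  rw [← Real.rpow_natCast (v ^ p) 2, ← Real.rpow_mul hv]
  norm_num [mul_comm]

lemma f_bound {α : ℝ} (hα : α ≤ 1) {v : ℝ} (hv : 0 < v) :
    ((1+v) ^ α - v ^ α)^2 ≤ α^2 * v ^ (2*α-2) := by
  have h := rpow_diff_le α hα hv le_rfl (by linarith : v ≤ 1 + v)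
  have h2 : (1 + v) - v = 1 := by ring
  rw [h2, mul_one] at h
  calc ((1+v) ^ α - v ^ α)^2 = |(1+v) ^ α - v ^ α|^2 := (sq_abs _).symm
    _ ≤ (|α| * v ^ (α-1))^2 := by
        apply pow_le_pow_left₀ (abs_nonneg _) h
    _ = α^2 * v ^ (2*α-2) := by
        rw [mul_pow, sq_abs, rpow_sq hv.le]
        ring_nf

lemma f_measurable (α : ℝ) : Measurable (fun v : ℝ => ((1+v) ^ α - v ^ α)^2) := by
  fun_prop

lemma f_integrable {α : ℝ} (hα1 : -(1/2) < α) (hα2 : α < 1/2) :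
    IntegrableOn (fun v : ℝ => ((1+v) ^ α - v ^ α)^2) (Set.Ioi 0) := by
  have hmeas := f_measurable α
  rw [← Set.Ioc_union_Ioi_eq_Ioi (zero_le_one' ℝ)]
  apply IntegrableOn.union
  · -- on Ioc 0 1
    have hint : IntegrableOn (fun v : ℝ => 2*(2 ^ |α|)^2 + 2*v ^ (2*α)) (Set.Ioc 0 1) := by
      apply Integrable.add
      · exact (integrableOn_const_iff).mpr (Or.inr (by simp))
      · have := intervalIntegral.intervalIntegrable_rpow' (a := 0) (b := 1)
          (by linarith : (-1:ℝ) < 2*α)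
        rw [intervalIntegrable_iff_integrableOn_Ioc_of_le zero_le_one] at this
        exact this.const_mul 2
    apply Integrable.mono' hint hmeas.aestronglyMeasurable.restrict
    apply MeasureTheory.ae_restrict_of_forall_mem measurableSet_Ioc
    intro v hv
    have hv0 : (0:ℝ) < v := hv.1
    have h1v : (1+v) ^ α ≤ 2 ^ |α| := by
      rcases le_or_gt 0 α with h | h
      · calc (1+v) ^ α ≤ 2 ^ α := Real.rpow_le_rpow (by linarith) (by linarith [hv.2]) h
          _ ≤ 2 ^ |α| := Real.rpow_le_rpow_of_exponent_le one_le_two (le_abs_self α)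
      · calc (1+v) ^ α ≤ 1 ^ α := Real.rpow_le_rpow_of_nonpos one_pos (by linarith) h.le
          _ = 1 := Real.one_rpow α
          _ ≤ 2 ^ |α| := Real.one_le_rpow one_le_two (abs_nonneg α)
    have hva : v ^ α ≤ 2 ^ |α| ∨ (v ^ α)^2 ≤ v ^ (2*α) := Or.inr (le_of_eq (rpow_sq hv0.le))
    have h2 : (v ^ α)^2 = v ^ (2*α) := rpow_sq hv0.le
    have hnn1 : 0 ≤ (1+v) ^ α := Real.rpow_nonneg (by linarith) α
    have hnn2 : 0 ≤ v ^ α := Real.rpow_nonneg hv0.le α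
    rw [Real.norm_eq_abs, abs_of_nonneg (sq_nonneg _)]
    nlinarith [sq_nonneg ((1+v) ^ α + v ^ α), sq_nonneg ((1+v) ^ α - v ^ α)]
  · -- on Ioi 1
    have hint : IntegrableOn (fun v : ℝ => α^2 * v ^ (2*α-2)) (Set.Ioi 1) :=
      (integrableOn_Ioi_rpow_of_lt (by linarith) one_pos).const_mul _
    apply Integrable.mono' hint hmeas.aestronglyMeasurable.restrict
    apply MeasureTheory.ae_restrict_of_forall_mem measurableSet_Ioi
    intro v hv
    rw [Real.norm_eq_abs, abs_of_nonneg (sq_nonneg _)]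
    exact f_bound (by linarith) (lt_trans one_pos hv)

lemma rpow_le_endpoints {lo x hi p : ℝ} (hlo : 0 < lo) (h1 : lo ≤ x) (h2 : x ≤ hi) :
    x ^ p ≤ lo ^ p + hi ^ p := by
  rcases le_or_gt 0 p with hp | hp
  · have h3 := Real.rpow_le_rpow (hlo.le.trans h1) h2 hp
    have h4 := Real.rpow_nonneg hlo.le p
    linarith
  · have h3 := Real.rpow_le_rpow_of_nonpos hlo h1 hp.le
    have h4 := Real.rpow_nonneg (hlo.le.trans (h1.trans h2)) p
    linarith

section
variable {α γ a b : ℝ}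

lemma G_bound_lower (hα2 : α ≤ 1) (ha : 0 < a) (hab : a < b) {u : ℝ} (hu0 : 0 ≤ u) (hu : u ≤ a/2) :
    ((b-u) ^ α - (a-u) ^ α)^2 ≤ α^2 * (a/2) ^ (2*α-2) * (b-a)^2 := by
  have h := rpow_diff_le α hα2 (by linarith : (0:ℝ) < a/2)
    (by linarith : a/2 ≤ a - u) (by linarith : a - u ≤ b - u)
  have he : (b - u) - (a - u) = b - a := by ring
  rw [he] at h
  have hexp : 2*(α-1) = 2*α-2 := by ring
  calc ((b-u) ^ α - (a-u) ^ α)^2 = |(b-u) ^ α - (a-u) ^ α|^2 := (sq_abs _).symm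
    _ ≤ (|α| * (a/2) ^ (α-1) * (b-a))^2 :=
        pow_le_pow_left₀ (abs_nonneg _) h 2
    _ = α^2 * (a/2) ^ (2*α-2) * (b-a)^2 := by
        rw [mul_pow, mul_pow, sq_abs, rpow_sq (by linarith : (0:ℝ) ≤ a/2), hexp]

lemma G_measurable (α γ b a' : ℝ) :
    Measurable (fun u : ℝ => ((b-u) ^ α - (a'-u) ^ α)^2 * u ^ (-γ)) := by
  fun_prop

lemma II_G_lower (hα2 : α ≤ 1) (hγ0 : 0 ≤ γ) (hγ1 : γ < 1) (ha : 0 < a) (hab : a < b) :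
    IntervalIntegrable (fun u => ((b-u) ^ α - (a-u) ^ α)^2 * u ^ (-γ)) volume 0 (a/2) := by
  rw [intervalIntegrable_iff_integrableOn_Ioc_of_le (by linarith)]
  have hbi : IntegrableOn (fun u : ℝ => (α^2 * (a/2) ^ (2*α-2) * (b-a)^2) * u ^ (-γ))
      (Set.Ioc 0 (a/2)) := by
    have h0 := intervalIntegral.intervalIntegrable_rpow' (a := 0) (b := a/2)
      (by linarith : (-1:ℝ) < -γ)
    rw [intervalIntegrable_iff_integrableOn_Ioc_of_le (by linarith)] at h0
    exact h0.const_mul _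
  apply Integrable.mono' hbi ((G_measurable α γ b a).aestronglyMeasurable.restrict)
  apply ae_restrict_of_forall_mem measurableSet_Ioc
  intro u hu
  rw [Real.norm_eq_abs,
    abs_of_nonneg (mul_nonneg (sq_nonneg _) (Real.rpow_nonneg hu.1.le _))]
  exact mul_le_mul_of_nonneg_right (G_bound_lower hα2 ha hab hu.1.le hu.2)
    (Real.rpow_nonneg hu.1.le _)

lemma II_G_upper (hα1 : -(1/2) < α) (hγ0 : 0 ≤ γ) (ha : 0 < a) (hab : a < b) :
    IntervalIntegrable (fun u => ((b-u) ^ α - (a-u) ^ α)^2 * u ^ (-γ)) volume (a/2) a := by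
  rw [intervalIntegrable_iff_integrableOn_Ioc_of_le (by linarith)]
  have hbi : IntegrableOn
      (fun u : ℝ => (2*(b-a) ^ (2*α) + 2*b ^ (2*α)) * (a/2) ^ (-γ)
        + (2*(a/2) ^ (-γ)) * (a-u) ^ (2*α)) (Set.Ioc (a/2) a) := by
    apply Integrable.add ((integrableOn_const_iff).mpr (Or.inr (by simp)))
    have h1 : IntervalIntegrable (fun x : ℝ => x ^ (2*α)) volume (a - a/2) (a - a) :=
      intervalIntegral.intervalIntegrable_rpow' (by linarith)
    have h2 := h1.comp_sub_left a
    simp only [sub_sub_cancel, sub_self, sub_zero] at h2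
    rw [intervalIntegrable_iff_integrableOn_Ioc_of_le (by linarith)] at h2
    exact h2.const_mul _
  apply Integrable.mono' hbi ((G_measurable α γ b a).aestronglyMeasurable.restrict)
  apply ae_restrict_of_forall_mem measurableSet_Ioc
  intro u hu
  have hu0 : (0:ℝ) < u := lt_trans (by linarith) hu.1
  have hbu : (0:ℝ) < b - u := by linarith [hu.2]
  have hau : (0:ℝ) ≤ a - u := by linarith [hu.2]
  rw [Real.norm_eq_abs,
    abs_of_nonneg (mul_nonneg (sq_nonneg _) (Real.rpow_nonneg hu0.le _))]
  have e1 : u ^ (-γ) ≤ (a/2) ^ (-γ) :=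
    Real.rpow_le_rpow_of_nonpos (by linarith) hu.1.le (by linarith)
  have e2 : ((b-u) ^ α - (a-u) ^ α)^2 ≤ 2*(b-a) ^ (2*α) + 2*b ^ (2*α) + 2*(a-u) ^ (2*α) := by
    have k1 : ((b-u) ^ α)^2 = (b-u) ^ (2*α) := rpow_sq hbu.le
    have k2 : ((a-u) ^ α)^2 = (a-u) ^ (2*α) := rpow_sq hau
    have k3 : (b-u) ^ (2*α) ≤ (b-a) ^ (2*α) + b ^ (2*α) :=
      rpow_le_endpoints (by linarith) (by linarith [hu.2]) (by linarith)
    nlinarith [sq_nonneg ((b-u) ^ α + (a-u) ^ α), Real.rpow_nonneg hau (2*α)]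
  calc ((b-u) ^ α - (a-u) ^ α)^2 * u ^ (-γ)
      ≤ (2*(b-a) ^ (2*α) + 2*b ^ (2*α) + 2*(a-u) ^ (2*α)) * (a/2) ^ (-γ) := by
        apply mul_le_mul e2 e1 (Real.rpow_nonneg hu0.le _)
        have n1 := Real.rpow_nonneg (show (0:ℝ) ≤ b - a by linarith) (2*α)
        have n2 := Real.rpow_nonneg (show (0:ℝ) ≤ b by linarith) (2*α)
        have n3 := Real.rpow_nonneg hau (2*α)
        linarith
    _ = (2*(b-a) ^ (2*α) + 2*b ^ (2*α)) * (a/2) ^ (-γ)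
        + (2*(a/2) ^ (-γ)) * (a-u) ^ (2*α) := by ring

lemma II_G2 (hα1 : -(1/2) < α) (hγ0 : 0 ≤ γ) (ha : 0 < a) (hab : a < b) :
    IntervalIntegrable (fun u => (b-u) ^ (2*α) * u ^ (-γ)) volume a b := by
  rw [intervalIntegrable_iff_integrableOn_Ioc_of_le (by linarith)]
  have hbi : IntegrableOn (fun u : ℝ => a ^ (-γ) * (b-u) ^ (2*α)) (Set.Ioc a b) := by
    have h1 : IntervalIntegrable (fun x : ℝ => x ^ (2*α)) volume (b - a) (b - b) :=
      intervalIntegral.intervalIntegrable_rpow' (by linarith)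
    have h2 := h1.comp_sub_left b
    simp only [sub_sub_cancel, sub_self, sub_zero] at h2
    rw [intervalIntegrable_iff_integrableOn_Ioc_of_le (by linarith)] at h2
    exact h2.const_mul _
  have hmeas : Measurable (fun u : ℝ => (b-u) ^ (2*α) * u ^ (-γ)) := by fun_prop
  apply Integrable.mono' hbi (hmeas.aestronglyMeasurable.restrict)
  apply ae_restrict_of_forall_mem measurableSet_Ioc
  intro u hu
  have hu0 : (0:ℝ) < u := lt_trans ha hu.1
  have hbu : (0:ℝ) ≤ b - u := by linarith [hu.2]
  rw [Real.norm_eq_abs,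
    abs_of_nonneg (mul_nonneg (Real.rpow_nonneg hbu _) (Real.rpow_nonneg hu0.le _))]
  rw [mul_comm (a ^ (-γ))]
  exact mul_le_mul_of_nonneg_left
    (Real.rpow_le_rpow_of_nonpos ha hu.1.le (by linarith)) (Real.rpow_nonneg hbu _)

end

lemma key_eq {α γ a b : ℝ} (hα1 : -(1/2) < α) (hα2 : α < 1/2) (hγ0 : 0 ≤ γ) (hγ1 : γ < 1)
    (ha : 0 < a) (hab : a < b) :
    Phi α γ a b = (∫ u in (0:ℝ)..(a/2), ((b-u) ^ α - (a-u) ^ α)^2 * u ^ (-γ))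
      + (b-a) ^ (2*α+1) *
          (∫ v in Set.Ioc (0:ℝ) (a/(2*(b-a))), ((1+v) ^ α - v ^ α)^2 * (a - (b-a)*v) ^ (-γ))
      + (b-a) ^ (2*α+1) * (∫ w in Set.Ioc (0:ℝ) 1, w ^ (2*α) * (b - (b-a)*w) ^ (-γ)) := by
  have hh : 0 < b - a := by linarith
  have step2 : (∫ u in (a/2)..a, ((b-u) ^ α - (a-u) ^ α)^2 * u ^ (-γ))
      = (b-a) ^ (2*α+1) *
          ∫ v in Set.Ioc (0:ℝ) (a/(2*(b-a))), ((1+v) ^ α - v ^ α)^2 * (a - (b-a)*v) ^ (-γ) := by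
    have e1 : (∫ x in (0:ℝ)..(a/2), ((b-(a-x)) ^ α - (a-(a-x)) ^ α)^2 * (a-x) ^ (-γ))
        = ∫ u in (a/2)..a, ((b-u) ^ α - (a-u) ^ α)^2 * u ^ (-γ) := by
      have h := intervalIntegral.integral_comp_sub_left (a := (0:ℝ)) (b := a/2)
        (fun u => ((b-u) ^ α - (a-u) ^ α)^2 * u ^ (-γ)) a
      simpa [sub_half] using h
    have e2 : (b-a) • (∫ v in (0:ℝ)..(a/(2*(b-a))),
          ((b-(a-(b-a)*v)) ^ α - (a-(a-(b-a)*v)) ^ α)^2 * (a-(b-a)*v) ^ (-γ))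
        = ∫ x in (0:ℝ)..(a/2), ((b-(a-x)) ^ α - (a-(a-x)) ^ α)^2 * (a-x) ^ (-γ) := by
      have h := intervalIntegral.smul_integral_comp_mul_left (a := (0:ℝ)) (b := a/(2*(b-a)))
        (fun x => ((b-(a-x)) ^ α - (a-(a-x)) ^ α)^2 * (a-x) ^ (-γ)) (b-a)
      have h2 : (b-a) * (a/(2*(b-a))) = a/2 := by field_simp
      simpa [h2] using h
    have e3 : (∫ v in (0:ℝ)..(a/(2*(b-a))),
          ((b-(a-(b-a)*v)) ^ α - (a-(a-(b-a)*v)) ^ α)^2 * (a-(b-a)*v) ^ (-γ))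
        = (b-a) ^ (2*α) *
          ∫ v in (0:ℝ)..(a/(2*(b-a))), ((1+v) ^ α - v ^ α)^2 * (a-(b-a)*v) ^ (-γ) := by
      rw [← intervalIntegral.integral_const_mul]
      apply intervalIntegral.integral_congr
      intro v hv
      rw [Set.uIcc_of_le (by positivity : (0:ℝ) ≤ a/(2*(b-a)))] at hv
      have hv0 : (0:ℝ) ≤ v := hv.1
      have c1 : b - (a - (b-a)*v) = (b-a)*(1+v) := by ring
      have c2 : a - (a - (b-a)*v) = (b-a)*v := by ring
      beta_reduce
      rw [c1, c2, Real.mul_rpow hh.le (by linarith : (0:ℝ) ≤ 1+v), Real.mul_rpow hh.le hv0]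
      have c3 : ((b-a) ^ α * (1+v) ^ α - (b-a) ^ α * v ^ α)^2
          = ((b-a) ^ α)^2 * ((1+v) ^ α - v ^ α)^2 := by ring
      rw [c3, rpow_sq hh.le]
      ring
    rw [← e1, ← e2, e3, smul_eq_mul,
      intervalIntegral.integral_of_le (by positivity : (0:ℝ) ≤ a/(2*(b-a))),
      Real.rpow_add hh, Real.rpow_one]
    ring
  have step3 : (∫ u in Set.Ioo a b, (b-u) ^ (2*α) * u ^ (-γ))
      = (b-a) ^ (2*α+1) * ∫ w in Set.Ioc (0:ℝ) 1, w ^ (2*α) * (b-(b-a)*w) ^ (-γ) := by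
    have e1 : (∫ x in (0:ℝ)..(b-a), (b-(b-x)) ^ (2*α) * (b-x) ^ (-γ))
        = ∫ u in a..b, (b-u) ^ (2*α) * u ^ (-γ) := by
      have h := intervalIntegral.integral_comp_sub_left (a := (0:ℝ)) (b := b-a)
        (fun u => (b-u) ^ (2*α) * u ^ (-γ)) b
      simpa using h
    have e2 : (b-a) • (∫ w in (0:ℝ)..1, (b-(b-(b-a)*w)) ^ (2*α) * (b-(b-a)*w) ^ (-γ))
        = ∫ x in (0:ℝ)..(b-a), (b-(b-x)) ^ (2*α) * (b-x) ^ (-γ) := by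
      have h := intervalIntegral.smul_integral_comp_mul_left (a := (0:ℝ)) (b := (1:ℝ))
        (fun x => (b-(b-x)) ^ (2*α) * (b-x) ^ (-γ)) (b-a)
      simpa using h
    have e3 : (∫ w in (0:ℝ)..1, (b-(b-(b-a)*w)) ^ (2*α) * (b-(b-a)*w) ^ (-γ))
        = (b-a) ^ (2*α) * ∫ w in (0:ℝ)..1, w ^ (2*α) * (b-(b-a)*w) ^ (-γ) := by
      rw [← intervalIntegral.integral_const_mul]
      apply intervalIntegral.integral_congr
      intro w hw
      rw [Set.uIcc_of_le zero_le_one] at hw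
      have c1 : b - (b - (b-a)*w) = (b-a)*w := by ring
      beta_reduce
      rw [c1, Real.mul_rpow hh.le hw.1]
      ring
    rw [MeasureTheory.integral_Ioc_eq_integral_Ioo.symm,
      ← intervalIntegral.integral_of_le hab.le, ← e1, ← e2, e3, smul_eq_mul,
      intervalIntegral.integral_of_le (zero_le_one' ℝ),
      Real.rpow_add hh, Real.rpow_one]
    ring
  have split1 : (∫ u in Set.Ioo (0:ℝ) a, ((b-u) ^ α - (a-u) ^ α)^2 * u ^ (-γ))
      = (∫ u in (0:ℝ)..(a/2), ((b-u) ^ α - (a-u) ^ α)^2 * u ^ (-γ))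
        + ∫ u in (a/2)..a, ((b-u) ^ α - (a-u) ^ α)^2 * u ^ (-γ) := by
    have h := intervalIntegral.integral_add_adjacent_intervals
      (II_G_lower (by linarith) hγ0 hγ1 ha hab) (II_G_upper hα1 hγ0 ha hab)
    rw [intervalIntegral.integral_of_le ha.le, MeasureTheory.integral_Ioc_eq_integral_Ioo] at h
    exact h.symm
  rw [Phi, split1, step2, step3]


/-- Exact asymptotics: `E[(Z(t)-Z(s))²]/|t-s|^{2α+1} → c t^{-γ}` as `s → t`. -/
theorem Z_increment_exact_asymptotics (α γ : ℝ)
    (hα1 : -(1/2) < α) (hα2 : α < 1/2) (hγ0 : 0 ≤ γ) (hγ1 : γ < 1)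
    (t : ℝ) (ht : 0 < t) :
    IntegrableOn (fun v : ℝ => ((1+v) ^ α - v ^ α)^2) (Set.Ioi 0) ∧
    Filter.Tendsto
      (fun s : ℝ => Phi α γ (min s t) (max s t) / |t - s| ^ (2*α+1))
      (nhdsWithin t (Set.Ioi 0 \ {t}))
      (nhds ((1/(2*α+1) + ∫ v in Set.Ioi (0:ℝ), ((1+v) ^ α - v ^ α)^2) * t ^ (-γ))) := by
  refine ⟨f_integrable hα1 hα2, ?_⟩
  set l := nhdsWithin t (Set.Ioi 0 \ {t}) with hl
  have hmem : ∀ᶠ s in l, s ∈ Set.Ioi 0 \ {t} := eventually_mem_nhdsWithin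
  have hh0 : Filter.Tendsto (fun s : ℝ => |t - s|) l (nhds 0) := by
    have h1 : Filter.Tendsto (fun s : ℝ => |t - s|) (nhds t) (nhds |t - t|) :=
      ((continuous_const.sub continuous_id).abs).tendsto t
    simpa using h1.mono_left nhdsWithin_le_nhds
  have hclose : ∀ᶠ s in l, |t - s| < t/2 := hh0.eventually_lt_const (by positivity)
  -- basic facts for s in the filter
  have hfacts : ∀ s : ℝ, s ∈ Set.Ioi 0 \ {t} → |t - s| < t/2 →
      0 < min s t ∧ min s t < max s t ∧ max s t - min s t = |t - s| ∧ t/2 < min s t ∧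
        min s t ≤ t ∧ t ≤ max s t ∧ 0 < |t - s| := by
    intro s hs hc
    have hs0 : 0 < s := hs.1
    have hsne : s ≠ t := hs.2
    have h1 : 0 < min s t := lt_min hs0 ht
    have h2 : min s t < max s t := min_lt_max.mpr hsne
    have h3 : max s t - min s t = |t - s| := by
      rw [max_sub_min_eq_abs, abs_sub_comm]
    have h4 : t/2 < min s t := by
      have := le_abs_self (t - s)
      have := le_min (show t - |t - s| ≤ s by linarith [le_abs_self (t - s)]) (by linarith [abs_nonneg (t - s)] : t - |t - s| ≤ t)
      linarith
    exact ⟨h1, h2, h3, h4, min_le_right s t, le_max_right s t,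
      abs_pos.mpr (sub_ne_zero.mpr (Ne.symm hsne))⟩
  -- the eventual identity
  have hident : ∀ᶠ s in l, Phi α γ (min s t) (max s t) / |t - s| ^ (2*α+1)
      = (∫ u in (0:ℝ)..(min s t/2),
            ((max s t-u) ^ α - (min s t-u) ^ α)^2 * u ^ (-γ)) / |t - s| ^ (2*α+1)
        + (∫ v in Set.Ioc (0:ℝ) (min s t/(2*|t - s|)),
            ((1+v) ^ α - v ^ α)^2 * (min s t - |t - s| * v) ^ (-γ))
        + (∫ w in Set.Ioc (0:ℝ) 1, w ^ (2*α) * (max s t - |t - s| * w) ^ (-γ)) := by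
    filter_upwards [hmem, hclose] with s hs hc
    obtain ⟨h1, h2, h3, h4, h5, h6, h7⟩ := hfacts s hs hc
    have hkey := key_eq (α := α) (γ := γ) hα1 hα2 hγ0 hγ1 h1 h2
    rw [h3] at hkey
    rw [hkey]
    have hp : (0:ℝ) < |t - s| ^ (2*α+1) := Real.rpow_pos_of_pos h7 _
    field_simp
  -- T2
  have hmax : Filter.Tendsto (fun s : ℝ => max s t) l (nhds t) := by
    have h1 : Filter.Tendsto (fun s : ℝ => max s t) (nhds t) (nhds (max t t)) :=
      (continuous_id.max continuous_const).tendsto t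
    simpa using h1.mono_left nhdsWithin_le_nhds
  have hmin : Filter.Tendsto (fun s : ℝ => min s t) l (nhds t) := by
    have h1 : Filter.Tendsto (fun s : ℝ => min s t) (nhds t) (nhds (min t t)) :=
      (continuous_id.min continuous_const).tendsto t
    simpa using h1.mono_left nhdsWithin_le_nhds
  have hcont : ContinuousAt (fun x : ℝ => x ^ (-γ)) t :=
    Real.continuousAt_rpow_const t (-γ) (Or.inl ht.ne')
  have T2 : Filter.Tendsto
      (fun s : ℝ => ∫ w in Set.Ioc (0:ℝ) 1, w ^ (2*α) * (max s t - |t - s| * w) ^ (-γ)) l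
      (nhds (t ^ (-γ)/(2*α+1))) := by
    have hlim : (∫ w in Set.Ioc (0:ℝ) 1, w ^ (2*α) * t ^ (-γ)) = t ^ (-γ)/(2*α+1) := by
      rw [MeasureTheory.integral_mul_const]
      have h1 : (∫ w in Set.Ioc (0:ℝ) 1, w ^ (2*α)) = ∫ w in (0:ℝ)..1, w ^ (2*α) := by
        rw [intervalIntegral.integral_of_le zero_le_one]
      rw [h1, integral_rpow (Or.inl (by linarith)), Real.one_rpow,
        Real.zero_rpow (by linarith : 2*α+1 ≠ 0)]
      ring
    rw [← hlim]
    apply MeasureTheory.tendsto_integral_filter_of_dominated_convergence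
      (fun w => w ^ (2*α) * (t/2) ^ (-γ))
    · apply Filter.Eventually.of_forall
      intro s
      exact (by fun_prop :
        Measurable (fun w : ℝ => w ^ (2*α) * (max s t - |t - s| * w) ^ (-γ))).aestronglyMeasurable
    · filter_upwards [hmem, hclose] with s hs hc
      apply ae_restrict_of_forall_mem measurableSet_Ioc
      intro w hw
      have hw0 : (0:ℝ) < w := hw.1
      have h2 : |t - s| * w ≤ |t - s| := by
        nlinarith [abs_nonneg (t - s), hw.2]
      have h1 : t/2 ≤ max s t - |t - s| * w := by
        have h3 : t ≤ max s t := le_max_right s t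
        linarith
      rw [Real.norm_eq_abs, abs_of_nonneg (mul_nonneg (Real.rpow_nonneg hw0.le _)
        (Real.rpow_nonneg (by linarith) _))]
      exact mul_le_mul_of_nonneg_left
        (Real.rpow_le_rpow_of_nonpos (by positivity) h1 (by linarith))
        (Real.rpow_nonneg hw0.le _)
    · have h0 := intervalIntegral.intervalIntegrable_rpow' (a := 0) (b := 1)
        (by linarith : (-1:ℝ) < 2*α)
      rw [intervalIntegrable_iff_integrableOn_Ioc_of_le zero_le_one] at h0
      exact h0.mul_const _
    · apply ae_restrict_of_forall_mem measurableSet_Ioc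
      intro w hw
      have base : Filter.Tendsto (fun s : ℝ => max s t - |t - s| * w) l (nhds t) := by
        have h2 : Filter.Tendsto (fun s : ℝ => |t - s| * w) l (nhds 0) := by
          simpa using hh0.mul_const w
        simpa using hmax.sub h2
      exact ((hcont.tendsto.comp base).const_mul _)
  -- T1
  have T1 : Filter.Tendsto
      (fun s : ℝ => ∫ v in Set.Ioc (0:ℝ) (min s t/(2*|t - s|)),
        ((1+v) ^ α - v ^ α)^2 * (min s t - |t - s| * v) ^ (-γ)) l
      (nhds ((∫ v in Set.Ioi (0:ℝ), ((1+v) ^ α - v ^ α)^2) * t ^ (-γ))) := by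
    have hlim : (∫ v in Set.Ioi (0:ℝ), ((1+v) ^ α - v ^ α)^2 * t ^ (-γ))
        = (∫ v in Set.Ioi (0:ℝ), ((1+v) ^ α - v ^ α)^2) * t ^ (-γ) :=
      MeasureTheory.integral_mul_const _ _
    rw [← hlim]
    have conv : ∀ s : ℝ, (∫ v in Set.Ioi (0:ℝ),
        (Set.Ioc (0:ℝ) (min s t/(2*|t - s|))).indicator
          (fun v => ((1+v) ^ α - v ^ α)^2 * (min s t - |t - s| * v) ^ (-γ)) v)
        = ∫ v in Set.Ioc (0:ℝ) (min s t/(2*|t - s|)),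
            ((1+v) ^ α - v ^ α)^2 * (min s t - |t - s| * v) ^ (-γ) := by
      intro s
      rw [MeasureTheory.integral_indicator measurableSet_Ioc,
        Measure.restrict_restrict measurableSet_Ioc,
        Set.inter_eq_left.mpr Set.Ioc_subset_Ioi_self]
    apply Filter.Tendsto.congr conv
    apply MeasureTheory.tendsto_integral_filter_of_dominated_convergence
      (fun v => ((1+v) ^ α - v ^ α)^2 * (t/4) ^ (-γ))
    · apply Filter.Eventually.of_forall
      intro s
      apply Measurable.aestronglyMeasurable
      apply Measurable.indicator ?_ measurableSet_Ioc
      fun_prop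
    · filter_upwards [hmem, hclose] with s hs hc
      apply ae_restrict_of_forall_mem measurableSet_Ioi
      intro v hv
      obtain ⟨h1, h2, h3, h4, h5, h6, h7⟩ := hfacts s hs hc
      by_cases hvm : v ∈ Set.Ioc (0:ℝ) (min s t/(2*|t - s|))
      · rw [Set.indicator_of_mem hvm]
        have hv2 : |t - s| * v ≤ min s t / 2 := by
          have := hvm.2
          rw [le_div_iff₀ (by positivity : (0:ℝ) < 2*|t - s|)] at this
          nlinarith
        have hbase : t/4 ≤ min s t - |t - s| * v := by linarith
        rw [Real.norm_eq_abs, abs_of_nonneg (mul_nonneg (sq_nonneg _)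
          (Real.rpow_nonneg (by linarith) _))]
        exact mul_le_mul_of_nonneg_left
          (Real.rpow_le_rpow_of_nonpos (by positivity) hbase (by linarith))
          (sq_nonneg _)
      · rw [Set.indicator_of_notMem hvm]
        simp only [norm_zero]
        exact mul_nonneg (sq_nonneg _) (Real.rpow_nonneg (by positivity) _)
    · exact (f_integrable hα1 hα2).mul_const _
    · apply ae_restrict_of_forall_mem measurableSet_Ioi
      intro v hv
      have hv0 : (0:ℝ) < v := hv
      have hev : ∀ᶠ s in l, (Set.Ioc (0:ℝ) (min s t/(2*|t - s|))).indicator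
          (fun v => ((1+v) ^ α - v ^ α)^2 * (min s t - |t - s| * v) ^ (-γ)) v
          = ((1+v) ^ α - v ^ α)^2 * (min s t - |t - s| * v) ^ (-γ) := by
        filter_upwards [hmem, hclose,
          hh0.eventually_lt_const (show (0:ℝ) < t/(4*(v+1)) by positivity)] with s hs hc hsm
        obtain ⟨h1, h2, h3, h4, h5, h6, h7⟩ := hfacts s hs hc
        apply Set.indicator_of_mem
        constructor
        · exact hv0
        · rw [le_div_iff₀ (by positivity : (0:ℝ) < 2*|t - s|)]
          rw [lt_div_iff₀ (by positivity : (0:ℝ) < 4*(v+1))] at hsm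
          nlinarith [abs_nonneg (t - s)]
      have base : Filter.Tendsto (fun s : ℝ => min s t - |t - s| * v) l (nhds t) := by
        have h2 : Filter.Tendsto (fun s : ℝ => |t - s| * v) l (nhds 0) := by
          simpa using hh0.mul_const v
        simpa using hmin.sub h2
      exact Filter.Tendsto.congr' (Filter.EventuallyEq.symm hev)
        ((hcont.tendsto.comp base).const_mul _)
  -- T_err
  have Terr : Filter.Tendsto
      (fun s : ℝ => (∫ u in (0:ℝ)..(min s t/2),
        ((max s t-u) ^ α - (min s t-u) ^ α)^2 * u ^ (-γ)) / |t - s| ^ (2*α+1)) l (nhds 0) := by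
    apply squeeze_zero' (g := fun s : ℝ =>
      (α^2 * (t/4) ^ (2*α-2) * ((t/2) ^ (-γ+1) / (-γ+1))) * |t - s| ^ (1-2*α))
    · filter_upwards [hmem, hclose] with s hs hc
      obtain ⟨h1, h2, h3, h4, h5, h6, h7⟩ := hfacts s hs hc
      apply div_nonneg ?_ (Real.rpow_nonneg (abs_nonneg _) _)
      apply intervalIntegral.integral_nonneg (by linarith)
      intro u hu
      exact mul_nonneg (sq_nonneg _) (Real.rpow_nonneg hu.1 _)
    · filter_upwards [hmem, hclose] with s hs hc
      obtain ⟨h1, h2, h3, h4, h5, h6, h7⟩ := hfacts s hs hc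
      have hC0 : (0:ℝ) ≤ α^2 * (min s t/2) ^ (2*α-2) * |t - s|^2 := by positivity
      have hint : (∫ u in (0:ℝ)..(min s t/2),
          ((max s t-u) ^ α - (min s t-u) ^ α)^2 * u ^ (-γ))
          ≤ (α^2 * (min s t/2) ^ (2*α-2) * |t - s|^2) * ((min s t/2) ^ (-γ+1) / (-γ+1)) := by
        have hmono : (∫ u in (0:ℝ)..(min s t/2),
            ((max s t-u) ^ α - (min s t-u) ^ α)^2 * u ^ (-γ))
            ≤ ∫ u in (0:ℝ)..(min s t/2),
              (α^2 * (min s t/2) ^ (2*α-2) * |t - s|^2) * u ^ (-γ) := by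
          apply intervalIntegral.integral_mono_on (by linarith)
            (II_G_lower (by linarith) hγ0 hγ1 h1 h2)
            (((intervalIntegral.intervalIntegrable_rpow'
              (by linarith : (-1:ℝ) < -γ)).const_mul _))
          intro u hu
          apply mul_le_mul_of_nonneg_right ?_ (Real.rpow_nonneg hu.1 _)
          have := G_bound_lower (by linarith : α ≤ 1) h1 h2 hu.1 hu.2
          rw [h3] at this
          exact this
        have hval : (∫ u in (0:ℝ)..(min s t/2),
            (α^2 * (min s t/2) ^ (2*α-2) * |t - s|^2) * u ^ (-γ))
            = (α^2 * (min s t/2) ^ (2*α-2) * |t - s|^2) * ((min s t/2) ^ (-γ+1) / (-γ+1)) := by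
          rw [intervalIntegral.integral_const_mul, integral_rpow (Or.inl (by linarith)),
            Real.zero_rpow (by linarith : -γ+1 ≠ 0)]
          ring
        linarith [hmono, le_of_eq hval]
      have hCle : (α^2 * (min s t/2) ^ (2*α-2) * |t - s|^2) * ((min s t/2) ^ (-γ+1) / (-γ+1))
          ≤ (α^2 * (t/4) ^ (2*α-2) * ((t/2) ^ (-γ+1) / (-γ+1))) * |t - s|^2 := by
        have k1 : (min s t/2) ^ (2*α-2) ≤ (t/4) ^ (2*α-2) :=
          Real.rpow_le_rpow_of_nonpos (by positivity) (by linarith) (by linarith)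
        have k2 : (min s t/2) ^ (-γ+1) ≤ (t/2) ^ (-γ+1) :=
          Real.rpow_le_rpow (by linarith) (by linarith) (by linarith)
        have n1 : (0:ℝ) ≤ (min s t/2) ^ (-γ+1) := Real.rpow_nonneg (by linarith) _
        have n2 : (0:ℝ) ≤ (min s t/2) ^ (2*α-2) := Real.rpow_nonneg (by linarith) _
        have n3 : (0:ℝ) ≤ (t/4) ^ (2*α-2) := Real.rpow_nonneg (by positivity) _
        have hγp : (0:ℝ) < -γ+1 := by linarith
        have hinv : (0:ℝ) ≤ (-γ+1)⁻¹ := inv_nonneg.mpr hγp.le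
        have hmm : (min s t/2) ^ (2*α-2) * (min s t/2) ^ (-γ+1)
            ≤ (t/4) ^ (2*α-2) * (t/2) ^ (-γ+1) := mul_le_mul k1 k2 n1 n3
        have hnn : (0:ℝ) ≤ α^2 * |t - s|^2 * (-γ+1)⁻¹ :=
          mul_nonneg (mul_nonneg (sq_nonneg α) (sq_nonneg _)) hinv
        calc (α^2 * (min s t/2) ^ (2*α-2) * |t - s|^2) * ((min s t/2) ^ (-γ+1) / (-γ+1))
            = (α^2 * |t - s|^2 * (-γ+1)⁻¹)
                * ((min s t/2) ^ (2*α-2) * (min s t/2) ^ (-γ+1)) := by ring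
          _ ≤ (α^2 * |t - s|^2 * (-γ+1)⁻¹) * ((t/4) ^ (2*α-2) * (t/2) ^ (-γ+1)) :=
              mul_le_mul_of_nonneg_left hmm hnn
          _ = (α^2 * (t/4) ^ (2*α-2) * ((t/2) ^ (-γ+1) / (-γ+1))) * |t - s|^2 := by ring
      have hdiv : (∫ u in (0:ℝ)..(min s t/2),
          ((max s t-u) ^ α - (min s t-u) ^ α)^2 * u ^ (-γ)) / |t - s| ^ (2*α+1)
          ≤ ((α^2 * (t/4) ^ (2*α-2) * ((t/2) ^ (-γ+1) / (-γ+1))) * |t - s|^2)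
            / |t - s| ^ (2*α+1) :=
        (div_le_div_iff_of_pos_right (Real.rpow_pos_of_pos h7 _)).mpr (hint.trans hCle)
      have e : |t - s|^2 / |t - s| ^ (2*α+1) = |t - s| ^ (1-2*α) := by
        rw [← Real.rpow_natCast |t - s| 2, ← Real.rpow_sub h7,
          show ((2:ℕ):ℝ) - (2*α+1) = 1-2*α by push_cast; ring]
      calc (∫ u in (0:ℝ)..(min s t/2),
          ((max s t-u) ^ α - (min s t-u) ^ α)^2 * u ^ (-γ)) / |t - s| ^ (2*α+1)
          ≤ ((α^2 * (t/4) ^ (2*α-2) * ((t/2) ^ (-γ+1) / (-γ+1))) * |t - s|^2)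
            / |t - s| ^ (2*α+1) := hdiv
        _ = (α^2 * (t/4) ^ (2*α-2) * ((t/2) ^ (-γ+1) / (-γ+1))) * |t - s| ^ (1-2*α) := by
            rw [mul_div_assoc, e]
    · have hc0 : ContinuousAt (fun x : ℝ => x ^ (1-2*α)) 0 :=
        Real.continuousAt_rpow_const 0 _ (Or.inr (by linarith))
      have h1 : Filter.Tendsto (fun s : ℝ => |t - s| ^ (1-2*α)) l
          (nhds ((0:ℝ) ^ (1-2*α))) := hc0.tendsto.comp hh0
      rw [Real.zero_rpow (by linarith : 1-2*α ≠ 0)] at h1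
      simpa using h1.const_mul (α^2 * (t/4) ^ (2*α-2) * ((t/2) ^ (-γ+1) / (-γ+1)))
  -- assemble
  have final := (Terr.add T1).add T2
  have hval : (0 + (∫ v in Set.Ioi (0:ℝ), ((1+v) ^ α - v ^ α)^2) * t ^ (-γ)
      + t ^ (-γ)/(2*α+1))
      = (1/(2*α+1) + ∫ v in Set.Ioi (0:ℝ), ((1+v) ^ α - v ^ α)^2) * t ^ (-γ) := by ring
  rw [hval] at final
  exact Filter.Tendsto.congr' (Filter.EventuallyEq.symm hident) final
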